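/- For any finite graph G with vertex cover number tau(G) >= 2, every cost-minimizing ordering of V(G) (for the minimum sum vertex cover objective) has effective first coverage r_sigma(1) <= tau(G) after iteratively removing leading vertices lying in a fixed minimum vertex cover; consequently, the resulting subgraph has at most tau(G)^2 edges, and tauplus(G) <= 2 * tau(G) * log2(tau(G)). -/

import Mathlib

open Finset

/-- Position at which hyperedge `e` is first hit by the ordering `σ`. -/
noncomputable def firstHit {α : Type*} (σ : α → ℕ) (e : Finset α) : ℕ :=
  sInf (σ '' ↑e)

/-- Total cost of an ordering: each edge pays the position of its first vertex. -/
noncomputable def totalCost {α : Type*} (E : Finset (Finset α)) (σ : α → ℕ) : ℕ :=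
  ∑ e ∈ E, firstHit σ e

open scoped Classical in
/-- Effective coverage of position `i`: the number of edges first hit at `i`. -/
noncomputable def coverage {α : Type*} (E : Finset (Finset α)) (σ : α → ℕ) (i : ℕ) : ℕ :=
  (E.filter fun e => firstHit σ e = i).card

/-- An ordering of the vertex set `V`: a bijection onto positions `{1, ..., |V|}`. -/
def IsOrdering {α : Type*} (V : Finset α) (σ : α → ℕ) : Prop :=
  Set.BijOn σ ↑V (Set.Icc 1 V.card)


/-- A set cover: a set of vertices intersecting every hyperedge.  For a graph
(each edge has two vertices) this is a vertex cover. -/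
def IsSetCover {α : Type*} [DecidableEq α] (E : Finset (Finset α)) (S : Finset α) : Prop :=
  ∀ e ∈ E, (e ∩ S).Nonempty

set_option linter.unusedSectionVars false
set_option maxHeartbeats 1000000

section Basics
variable {α : Type*} [DecidableEq α]

lemma firstHit_le {σ : α → ℕ} {e : Finset α} {x : α} (hx : x ∈ e) :
    firstHit σ e ≤ σ x :=
  Nat.sInf_le ⟨x, by simpa using hx, rfl⟩

lemma exists_firstHit {σ : α → ℕ} {e : Finset α} (he : e.Nonempty) :
    ∃ x ∈ e, σ x = firstHit σ e := by
  have h : (σ '' (↑e : Set α)).Nonempty :=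
    Set.Nonempty.image σ (Finset.coe_nonempty.2 he)
  obtain ⟨x, hx, hx2⟩ := Nat.sInf_mem h
  exact ⟨x, by simpa using hx, hx2⟩

variable {V : Finset α} {E : Finset (Finset α)}
  (hE : ∀ e ∈ E, e.card = 2 ∧ e ⊆ V) {σ : α → ℕ} (hσ : IsOrdering V σ)

include hσ in
lemma pos_mem {v : α} (hv : v ∈ V) : 1 ≤ σ v ∧ σ v ≤ V.card := by
  have := hσ.mapsTo hv; exact ⟨this.1, this.2⟩

include hE hσ in
lemma firstHit_bounds {e : Finset α} (he : e ∈ E) :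
    1 ≤ firstHit σ e ∧ firstHit σ e ≤ V.card := by
  obtain ⟨x, hx, hx2⟩ := exists_firstHit (σ := σ)
    (Finset.card_pos.1 (by rw [(hE e he).1]; norm_num))
  have := pos_mem hσ ((hE e he).2 hx)
  omega

include hσ in
lemma ordering_comp {π : ℕ → ℕ}
    (hπ : Set.BijOn π (Set.Icc 1 V.card) (Set.Icc 1 V.card)) :
    IsOrdering V (π ∘ σ) := hπ.comp hσ

/-- bijectivity on `Icc 1 n` from injectivity and mapsTo -/
lemma bijOn_of_injOn {π : ℕ → ℕ} {n : ℕ}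
    (hmaps : Set.MapsTo π (Set.Icc 1 n) (Set.Icc 1 n))
    (hinj : Set.InjOn π (Set.Icc 1 n)) :
    Set.BijOn π (Set.Icc 1 n) (Set.Icc 1 n) :=
  (Set.Finite.injOn_iff_bijOn_of_mapsTo (Set.finite_Icc 1 n) hmaps).1 hinj

end Basics

section Swap
variable {α : Type*} [DecidableEq α]
variable {V : Finset α} {E : Finset (Finset α)}
  (hE : ∀ e ∈ E, e.card = 2 ∧ e ⊆ V) {σ : α → ℕ} (hσ : IsOrdering V σ)
  (hopt : ∀ τ' : α → ℕ, IsOrdering V τ' → totalCost E σ ≤ totalCost E τ')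

open scoped Classical

include hE hσ hopt in
lemma coverage_mono_succ {i : ℕ} (hi : 1 ≤ i) :
    coverage E σ (i + 1) ≤ coverage E σ i := by
  set n := V.card with hn
  by_cases hin : i + 1 ≤ n
  swap
  · -- position i+1 beyond range: coverage is 0
    have : E.filter (fun e => firstHit σ e = i + 1) = ∅ := by
      apply Finset.filter_eq_empty_iff.2
      intro e he hfe
      have := (firstHit_bounds hE hσ he).2
      omega
    simp [coverage, this]
  · -- swap positions i and i+1
    set sw : ℕ → ℕ := fun p => if p = i then i + 1 else if p = i + 1 then i else p with hsw
    have hbij : Set.BijOn sw (Set.Icc 1 n) (Set.Icc 1 n) := by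
      apply bijOn_of_injOn
      · intro p hp
        simp only [Set.mem_Icc] at hp ⊢
        simp only [hsw]
        split_ifs <;> omega
      · intro p hp q hq hpq
        simp only [hsw] at hpq
        split_ifs at hpq <;> omega
    have hord : IsOrdering V (sw ∘ σ) := ordering_comp hσ hbij
    -- pointwise inequality
    have hpt : ∀ e ∈ E,
        firstHit (sw ∘ σ) e + (if firstHit σ e = i + 1 then 1 else 0)
          ≤ firstHit σ e + (if firstHit σ e = i then 1 else 0) := by
      intro e he
      obtain ⟨x, hx, hx2⟩ := exists_firstHit (σ := σ)
        (Finset.card_pos.1 (by rw [(hE e he).1]; norm_num))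
      have hle : firstHit (sw ∘ σ) e ≤ sw (σ x) := firstHit_le hx
      rw [hx2] at hle
      by_cases h1 : firstHit σ e = i
      · have : sw (firstHit σ e) = i + 1 := by simp [hsw, h1]
        rw [this] at hle
        split_ifs <;> omega
      · by_cases h2 : firstHit σ e = i + 1
        · have : sw (firstHit σ e) = i := by simp [hsw, h2]
          rw [this] at hle
          split_ifs <;> omega
        · have : sw (firstHit σ e) = firstHit σ e := by simp [hsw, h1, h2]
          rw [this] at hle
          split_ifs <;> omega
    have hsum : totalCost E (sw ∘ σ) + coverage E σ (i+1)
        ≤ totalCost E σ + coverage E σ i := by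
      have h1 : ∀ (j : ℕ), coverage E σ j = ∑ e ∈ E, (if firstHit σ e = j then 1 else 0) := by
        intro j; rw [coverage, Finset.card_filter]
      rw [totalCost, totalCost, h1, h1, ← Finset.sum_add_distrib, ← Finset.sum_add_distrib]
      exact Finset.sum_le_sum hpt
    have := hopt (sw ∘ σ) hord
    omega

include hE hσ hopt in
lemma coverage_mono {i : ℕ} (hi : 1 ≤ i) (m : ℕ) :
    coverage E σ (i + m) ≤ coverage E σ i := by
  induction m with
  | zero => simp
  | succ m ih =>
      have := coverage_mono_succ hE hσ hopt (i := i + m) (by omega)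
      have h2 : i + (m+1) = (i + m) + 1 := by omega
      rw [h2]; omega

end Swap

section Block

open scoped Classical

/-- The block-move map on positions: prefix `[1,i]` fixed, positions in `Q` sent to
`[i+1, i+k]` via `ρ`, the rest shifted up keeping order. -/
lemma block_bijOn (n i k : ℕ) (Q : Finset ℕ) (hQ : Q ⊆ Finset.Icc (i+1) n)
    (hk : Q.card = k) (hik : i + k ≤ n)
    (ρ : ℕ → ℕ) (hρ : ∀ p ∈ Q, i + 1 ≤ ρ p ∧ ρ p ≤ i + k)
    (hρinj : ∀ p ∈ Q, ∀ q ∈ Q, ρ p = ρ q → p = q) :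
    Set.BijOn (fun p => if p ≤ i then p else if p ∈ Q then ρ p
      else p + (k - (Q.filter (· < p)).card)) (Set.Icc 1 n) (Set.Icc 1 n) := by
  set a : ℕ → ℕ := fun p => (Q.filter (· < p)).card with ha
  set f : ℕ → ℕ := fun p => if p ≤ i then p else if p ∈ Q then ρ p
      else p + (k - a p) with hf
  have h_a_le_k : ∀ p, a p ≤ k := by
    intro p; rw [← hk]; exact Finset.card_le_card (Finset.filter_subset _ _)
  have h_a_mono : ∀ p q, p ≤ q → a p ≤ a q := by
    intro p q hpq
    apply Finset.card_le_card
    intro x hx; simp only [Finset.mem_filter] at hx ⊢; exact ⟨hx.1, by omega⟩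
  have h_low : ∀ p, p ∉ Q → i + 1 ≤ p → a p + i + 1 ≤ p := by
    intro p hpQ hip
    have : Q.filter (· < p) ⊆ Finset.Icc (i+1) (p-1) := by
      intro q hq
      simp only [Finset.mem_filter] at hq
      have := hQ hq.1
      simp only [Finset.mem_Icc] at this ⊢
      omega
    have := Finset.card_le_card this
    rw [Nat.card_Icc] at this
    simp only [ha] at *
    omega
  have h_up : ∀ p, p ∉ Q → p ≤ n → p + (k - a p) ≤ n := by
    intro p hpQ hpn
    have hsplit := Finset.card_filter_add_card_filter_not
      (s := Q) (p := (· < p))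
    have hsub : Q.filter (fun q => ¬ q < p) ⊆ Finset.Icc (p+1) n := by
      intro q hq
      simp only [Finset.mem_filter] at hq
      have h1 := hQ hq.1
      simp only [Finset.mem_Icc] at h1 ⊢
      have : q ≠ p := by rintro rfl; exact hpQ hq.1
      omega
    have h2 := Finset.card_le_card hsub
    rw [Nat.card_Icc] at h2
    simp only [ha] at *
    omega
  have h_gap : ∀ p q, p ∉ Q → i + 1 ≤ p → p < q → a q ≤ a p + (q - p - 1) := by
    intro p q hpQ hip hpq
    have hsub : Q.filter (· < q) ⊆ Q.filter (· < p) ∪ Finset.Icc (p+1) (q-1) := by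
      intro x hx
      simp only [Finset.mem_filter, Finset.mem_union, Finset.mem_Icc] at hx ⊢
      have hxp : x ≠ p := by rintro rfl; exact hpQ hx.1
      have := hQ hx.1
      simp only [Finset.mem_Icc] at this
      by_cases hc : x < p
      · exact Or.inl ⟨hx.1, hc⟩
      · exact Or.inr (by omega)
    have := (Finset.card_le_card hsub).trans (Finset.card_union_le _ _)
    rw [Nat.card_Icc] at this
    simp only [ha] at *
    omega
  -- classification
  have key : ∀ p ∈ Set.Icc 1 n,
      (p ≤ i ∧ f p = p) ∨
      (p ∈ Q ∧ f p = ρ p ∧ i + 1 ≤ f p ∧ f p ≤ i + k) ∨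
      (p ∉ Q ∧ i + 1 ≤ p ∧ f p = p + (k - a p) ∧ i + k + 1 ≤ f p ∧ f p ≤ n) := by
    intro p hp
    simp only [Set.mem_Icc] at hp
    by_cases h1 : p ≤ i
    · exact Or.inl ⟨h1, by simp [hf, h1]⟩
    · by_cases h2 : p ∈ Q
      · refine Or.inr (Or.inl ⟨h2, ?_, ?_, ?_⟩)
        · simp [hf, h1, h2]
        · simp [hf, h1, h2]; exact (hρ p h2).1
        · simp [hf, h1, h2]; exact (hρ p h2).2
      · have hfp : f p = p + (k - a p) := by simp [hf, h1, h2]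
        have hl := h_low p h2 (by omega)
        have hu := h_up p h2 hp.2
        have hak := h_a_le_k p
        exact Or.inr (Or.inr ⟨h2, by omega, hfp, by omega, by omega⟩)
  apply bijOn_of_injOn
  · intro p hp
    rcases key p hp with ⟨h1, h2⟩ | ⟨h1, h2, h3, h4⟩ | ⟨h1, h2, h3, h4, h5⟩ <;>
      simp only [Set.mem_Icc] at hp ⊢ <;> omega
  · intro p hp q hq hpq
    rcases key p hp with ⟨h1, h2⟩ | ⟨h1, h2, h3, h4⟩ | ⟨h1, h2, h3, h4, h5⟩ <;>
      rcases key q hq with ⟨g1, g2⟩ | ⟨g1, g2, g3, g4⟩ | ⟨g1, g2, g3, g4, g5⟩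
    · omega
    · omega
    · omega
    · omega
    · exact hρinj p h1 q g1 (by rw [← h2, ← g2, hpq])
    · omega
    · omega
    · omega
    · -- both in third class
      rcases lt_trichotomy p q with hlt | heq | hlt
      · have := h_gap p q h1 h2 hlt
        have := h_a_mono p q (le_of_lt hlt)
        have := h_a_le_k p
        have := h_a_le_k q
        omega
      · exact heq
      · have := h_gap q p g1 g2 hlt
        have := h_a_mono q p (le_of_lt hlt)
        have := h_a_le_k p
        have := h_a_le_k q
        omega

end Block

open scoped Classical in
noncomputable def Ufun {α : Type*} (E : Finset (Finset α)) (σ : α → ℕ) (i : ℕ) : ℕ :=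
  (E.filter fun e => i < firstHit σ e).card

open scoped Classical in
noncomputable def gfun {α : Type*} (E : Finset (Finset α)) (σ : α → ℕ) (i : ℕ) : ℕ :=
  ∑ e ∈ E.filter (fun e => i < firstHit σ e), (firstHit σ e - i)

section Master
variable {α : Type*} [DecidableEq α]
variable {V : Finset α} {E : Finset (Finset α)}
  (hE : ∀ e ∈ E, e.card = 2 ∧ e ⊆ V)
  {tau : ℕ} {S : Finset α} (hSV : S ⊆ V) (hScov : IsSetCover E S) (hScard : S.card = tau)
  {σ : α → ℕ} (hσ : IsOrdering V σ)
  (hopt : ∀ τ' : α → ℕ, IsOrdering V τ' → totalCost E σ ≤ totalCost E τ')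

open scoped Classical

include hE hSV hScov hScard hσ hopt in
lemma master (i : ℕ) : 2 * gfun E σ i ≤ (tau + 1) * Ufun E σ i := by
  by_cases hU0 : Ufun E σ i = 0
  · have hemp : E.filter (fun e => i < firstHit σ e) = ∅ :=
      Finset.card_eq_zero.1 hU0
    have : gfun E σ i = 0 := by rw [gfun, hemp]; simp
    omega
  set n := V.card with hn
  -- an uncovered edge exists
  obtain ⟨e₀, he₀⟩ : ∃ e₀, e₀ ∈ E.filter (fun e => i < firstHit σ e) := by
    rcases Finset.card_pos.1 (Nat.pos_of_ne_zero hU0) with ⟨e₀, h⟩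
    exact ⟨e₀, h⟩
  simp only [Finset.mem_filter] at he₀
  obtain ⟨s₀, hs₀⟩ := hScov e₀ he₀.1
  rw [Finset.mem_inter] at hs₀
  have hs₀V : s₀ ∈ V := hSV hs₀.2
  have hσs₀ : i < σ s₀ := lt_of_lt_of_le he₀.2 (firstHit_le hs₀.1)
  have hs₀n : σ s₀ ≤ n := (pos_mem hσ hs₀V).2
  set B : Finset α := S.filter (fun s => i < σ s) with hB
  set Q : Finset ℕ := B.image σ with hQ
  set k : ℕ := Q.card with hk
  have hQB : Q.card = B.card := by
    apply Finset.card_image_of_injOn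
    exact hσ.injOn.mono (by intro x hx; exact hSV (Finset.mem_of_mem_filter x hx))
  have hkτ : k ≤ tau := by
    rw [hk, hQB, ← hScard]
    exact Finset.card_le_card (Finset.filter_subset _ _)
  have hQsub : Q ⊆ Finset.Icc (i+1) n := by
    intro q hq
    rw [hQ, Finset.mem_image] at hq
    obtain ⟨s, hs, rfl⟩ := hq
    rw [hB, Finset.mem_filter] at hs
    have := pos_mem hσ (hSV hs.1)
    simp only [Finset.mem_Icc]
    omega
  have hik : i + k ≤ n := by
    have := Finset.card_le_card hQsub
    rw [Nat.card_Icc] at this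
    omega
  set a : ℕ → ℕ := fun p => (Q.filter (· < p)).card with ha
  have h_a_lt : ∀ p ∈ Q, a p < k := by
    intro p hp
    rw [hk]
    apply Finset.card_lt_card
    constructor
    · exact Finset.filter_subset _ _
    · intro hcon
      have := hcon hp
      simp only [Finset.mem_filter] at this
      omega
  have h_a_strict : ∀ p ∈ Q, ∀ q ∈ Q, p < q → a p < a q := by
    intro p hp q hq hpq
    have hsub : insert p (Q.filter (· < p)) ⊆ Q.filter (· < q) := by
      intro x hx
      rcases Finset.mem_insert.1 hx with rfl | hx
      · exact Finset.mem_filter.2 ⟨hp, hpq⟩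
      · simp only [Finset.mem_filter] at hx ⊢; exact ⟨hx.1, by omega⟩
    have := Finset.card_le_card hsub
    rw [Finset.card_insert_of_notMem (by simp [Finset.mem_filter])] at this
    simp only [ha] at *
    omega
  set ρ₁ : ℕ → ℕ := fun p => i + 1 + a p with hρ₁d
  set ρ₂ : ℕ → ℕ := fun p => i + (k - a p) with hρ₂d
  have hρ₁ : ∀ p ∈ Q, i + 1 ≤ ρ₁ p ∧ ρ₁ p ≤ i + k := by
    intro p hp; have := h_a_lt p hp; simp only [hρ₁d]; omega
  have hρ₂ : ∀ p ∈ Q, i + 1 ≤ ρ₂ p ∧ ρ₂ p ≤ i + k := by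
    intro p hp; have := h_a_lt p hp; simp only [hρ₂d]; omega
  have hρ₁inj : ∀ p ∈ Q, ∀ q ∈ Q, ρ₁ p = ρ₁ q → p = q := by
    intro p hp q hq hpq
    simp only [hρ₁d] at hpq
    rcases lt_trichotomy p q with h | h | h
    · have := h_a_strict p hp q hq h; omega
    · exact h
    · have := h_a_strict q hq p hp h; omega
  have hρ₂inj : ∀ p ∈ Q, ∀ q ∈ Q, ρ₂ p = ρ₂ q → p = q := by
    intro p hp q hq hpq
    simp only [hρ₂d] at hpq
    have h1 := h_a_lt p hp
    have h2 := h_a_lt q hq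
    rcases lt_trichotomy p q with h | h | h
    · have := h_a_strict p hp q hq h; omega
    · exact h
    · have := h_a_strict q hq p hp h; omega
  set π₁ : ℕ → ℕ := fun p => if p ≤ i then p else if p ∈ Q then ρ₁ p else p + (k - a p)
    with hπ₁d
  set π₂ : ℕ → ℕ := fun p => if p ≤ i then p else if p ∈ Q then ρ₂ p else p + (k - a p)
    with hπ₂d
  have hbij₁ := block_bijOn n i k Q hQsub rfl hik ρ₁ hρ₁ hρ₁inj
  have hbij₂ := block_bijOn n i k Q hQsub rfl hik ρ₂ hρ₂ hρ₂inj
  have hord₁ : IsOrdering V (π₁ ∘ σ) := ordering_comp hσ hbij₁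
  have hord₂ : IsOrdering V (π₂ ∘ σ) := ordering_comp hσ hbij₂
  -- canonical cover vertex of an edge
  set c : Finset α → α := fun e => if h : (e ∩ S).Nonempty then h.choose else s₀ with hcd
  have hc : ∀ e ∈ E, c e ∈ e ∧ c e ∈ S := by
    intro e he
    have hne := hScov e he
    have : c e ∈ e ∩ S := by
      simp only [hcd, dif_pos hne]
      exact hne.choose_spec
    rw [Finset.mem_inter] at this
    exact this
  -- pointwise bounds
  have hcov_pt : ∀ e ∈ E, firstHit σ e ≤ i →
      firstHit (π₁ ∘ σ) e ≤ firstHit σ e ∧ firstHit (π₂ ∘ σ) e ≤ firstHit σ e := by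
    intro e he hfe
    obtain ⟨x, hx, hx2⟩ := exists_firstHit (σ := σ)
      (Finset.card_pos.1 (by rw [(hE e he).1]; norm_num))
    have h1 : firstHit (π₁ ∘ σ) e ≤ π₁ (σ x) := firstHit_le hx
    have h2 : firstHit (π₂ ∘ σ) e ≤ π₂ (σ x) := firstHit_le hx
    rw [hx2] at h1 h2
    have e1 : π₁ (firstHit σ e) = firstHit σ e := by simp [hπ₁d, hfe]
    have e2 : π₂ (firstHit σ e) = firstHit σ e := by simp [hπ₂d, hfe]
    rw [e1] at h1
    rw [e2] at h2
    exact ⟨h1, h2⟩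
  have hunc_pt : ∀ e ∈ E, i < firstHit σ e →
      firstHit (π₁ ∘ σ) e + firstHit (π₂ ∘ σ) e ≤ 2*i + k + 1 := by
    intro e he hfe
    obtain ⟨hce, hcS⟩ := hc e he
    have hσc : i < σ (c e) := lt_of_lt_of_le hfe (firstHit_le hce)
    have hcB : c e ∈ B := Finset.mem_filter.2 ⟨hcS, hσc⟩
    have hcQ : σ (c e) ∈ Q := Finset.mem_image_of_mem σ hcB
    have h1 : firstHit (π₁ ∘ σ) e ≤ π₁ (σ (c e)) := firstHit_le hce
    have h2 : firstHit (π₂ ∘ σ) e ≤ π₂ (σ (c e)) := firstHit_le hce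
    have e1 : π₁ (σ (c e)) = i + 1 + a (σ (c e)) := by
      simp [hπ₁d, hρ₁d, hcQ]; omega
    have e2 : π₂ (σ (c e)) = i + (k - a (σ (c e))) := by
      simp [hπ₂d, hρ₂d, hcQ]; omega
    have := h_a_lt _ hcQ
    omega
  -- sum up
  have hopt₁ := hopt (π₁ ∘ σ) hord₁
  have hopt₂ := hopt (π₂ ∘ σ) hord₂
  have hsplit : ∀ τ' : α → ℕ, totalCost E τ' =
      (∑ e ∈ E.filter (fun e => i < firstHit σ e), firstHit τ' e) +
      (∑ e ∈ E.filter (fun e => ¬ i < firstHit σ e), firstHit τ' e) := by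
    intro τ'
    rw [totalCost, ← Finset.sum_filter_add_sum_filter_not E (fun e => i < firstHit σ e)]
  have hS1 : ∑ e ∈ E.filter (fun e => i < firstHit σ e),
      (firstHit (π₁ ∘ σ) e + firstHit (π₂ ∘ σ) e) ≤ (2*i + k + 1) * Ufun E σ i := by
    rw [Ufun]
    calc ∑ e ∈ E.filter (fun e => i < firstHit σ e),
        (firstHit (π₁ ∘ σ) e + firstHit (π₂ ∘ σ) e)
        ≤ ∑ _e ∈ E.filter (fun e => i < firstHit σ e), (2*i + k + 1) := by
          apply Finset.sum_le_sum
          intro e he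
          rw [Finset.mem_filter] at he
          exact hunc_pt e he.1 he.2
      _ = (2*i + k + 1) * (E.filter (fun e => i < firstHit σ e)).card := by
          rw [Finset.sum_const, smul_eq_mul, mul_comm]
  have hS2 : ∑ e ∈ E.filter (fun e => ¬ i < firstHit σ e),
      (firstHit (π₁ ∘ σ) e + firstHit (π₂ ∘ σ) e) ≤
      ∑ e ∈ E.filter (fun e => ¬ i < firstHit σ e), 2 * firstHit σ e := by
    apply Finset.sum_le_sum
    intro e he
    rw [Finset.mem_filter] at he
    have := hcov_pt e he.1 (by omega)
    omega
  have hgU : gfun E σ i + i * Ufun E σ i =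
      ∑ e ∈ E.filter (fun e => i < firstHit σ e), firstHit σ e := by
    have hconst : i * Ufun E σ i = ∑ _e ∈ E.filter (fun e => i < firstHit σ e), i := by
      rw [Ufun, Finset.sum_const, smul_eq_mul, mul_comm]
    rw [gfun, hconst, ← Finset.sum_add_distrib]
    apply Finset.sum_congr rfl
    intro e he
    rw [Finset.mem_filter] at he
    omega
  have hmain : 2 * totalCost E σ ≤ totalCost E (π₁ ∘ σ) + totalCost E (π₂ ∘ σ) := by
    omega
  rw [hsplit (π₁ ∘ σ), hsplit (π₂ ∘ σ), hsplit σ] at hmain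
  have hcomb := le_trans hmain (by
    have := add_le_add hS1 hS2
    -- rearrange
    calc (∑ e ∈ E.filter (fun e => i < firstHit σ e), firstHit (π₁ ∘ σ) e +
            ∑ e ∈ E.filter (fun e => ¬ i < firstHit σ e), firstHit (π₁ ∘ σ) e) +
          (∑ e ∈ E.filter (fun e => i < firstHit σ e), firstHit (π₂ ∘ σ) e +
            ∑ e ∈ E.filter (fun e => ¬ i < firstHit σ e), firstHit (π₂ ∘ σ) e)
        = ∑ e ∈ E.filter (fun e => i < firstHit σ e),
            (firstHit (π₁ ∘ σ) e + firstHit (π₂ ∘ σ) e) +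
          ∑ e ∈ E.filter (fun e => ¬ i < firstHit σ e),
            (firstHit (π₁ ∘ σ) e + firstHit (π₂ ∘ σ) e) := by
          rw [Finset.sum_add_distrib, Finset.sum_add_distrib]; ring
      _ ≤ (2*i + k + 1) * Ufun E σ i +
          ∑ e ∈ E.filter (fun e => ¬ i < firstHit σ e), 2 * firstHit σ e :=
          add_le_add hS1 hS2)
  -- now: 2 * (Σ_unc fh + Σ_cov fh) ≤ (2i+k+1) U + 2 Σ_cov fh
  have hfin : 2 * (∑ e ∈ E.filter (fun e => i < firstHit σ e), firstHit σ e)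
      ≤ (2*i + k + 1) * Ufun E σ i := by
    have h2 : ∑ e ∈ E.filter (fun e => ¬ i < firstHit σ e), 2 * firstHit σ e =
        2 * ∑ e ∈ E.filter (fun e => ¬ i < firstHit σ e), firstHit σ e := by
      rw [Finset.mul_sum]
    omega
  have : 2 * (gfun E σ i + i * Ufun E σ i) ≤ (2*i + k + 1) * Ufun E σ i := by
    rw [hgU]; exact hfin
  have hkk : (2*i + k + 1) * Ufun E σ i = 2*i*Ufun E σ i + (k+1) * Ufun E σ i := by ring
  have hkt : (k+1) * Ufun E σ i ≤ (tau+1) * Ufun E σ i := by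
    apply Nat.mul_le_mul_right; omega
  nlinarith [this, hkk, hkt]

end Master

section Recur
variable {α : Type*} [DecidableEq α]

open scoped Classical

lemma U_succ (E : Finset (Finset α)) (σ : α → ℕ) (i : ℕ) :
    Ufun E σ i = Ufun E σ (i+1) + coverage E σ (i+1) := by
  rw [Ufun, Ufun, coverage]
  rw [← Finset.card_union_of_disjoint (by
    rw [Finset.disjoint_left]
    intro e he1 he2
    simp only [Finset.mem_filter] at he1 he2
    omega)]
  congr 1
  ext e
  simp only [Finset.mem_union, Finset.mem_filter]
  by_cases he : e ∈ E <;> simp [he] <;> omega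

lemma g_succ (E : Finset (Finset α)) (σ : α → ℕ) (i : ℕ) :
    gfun E σ i = gfun E σ (i+1) + Ufun E σ i := by
  have h1 : gfun E σ i
      = (∑ e ∈ E.filter (fun e => i < firstHit σ e), (firstHit σ e - (i+1)))
        + Ufun E σ i := by
    have hconst : Ufun E σ i = ∑ _e ∈ E.filter (fun e => i < firstHit σ e), 1 := by
      rw [Ufun, Finset.card_eq_sum_ones]
    rw [gfun, hconst, ← Finset.sum_add_distrib]
    apply Finset.sum_congr rfl
    intro e he
    rw [Finset.mem_filter] at he
    omega
  have h2 : ∑ e ∈ E.filter (fun e => i < firstHit σ e), (firstHit σ e - (i+1))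
      = gfun E σ (i+1) := by
    rw [gfun]
    have hsplit : E.filter (fun e => i < firstHit σ e)
        = E.filter (fun e => i+1 < firstHit σ e) ∪ E.filter (fun e => firstHit σ e = i+1) := by
      ext e
      simp only [Finset.mem_union, Finset.mem_filter]
      by_cases he : e ∈ E <;> simp [he] <;> omega
    rw [hsplit, Finset.sum_union (by
      rw [Finset.disjoint_left]
      intro e he1 he2
      simp only [Finset.mem_filter] at he1 he2
      omega)]
    have : ∑ e ∈ E.filter (fun e => firstHit σ e = i+1), (firstHit σ e - (i+1)) = 0 := by
      apply Finset.sum_eq_zero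
      intro e he
      rw [Finset.mem_filter] at he
      omega
    omega
  omega

lemma U_zero {V : Finset α} {E : Finset (Finset α)}
    (hE : ∀ e ∈ E, e.card = 2 ∧ e ⊆ V) {σ : α → ℕ} (hσ : IsOrdering V σ) :
    Ufun E σ 0 = E.card := by
  rw [Ufun]
  congr 1
  apply Finset.filter_true_of_mem
  intro e he
  exact (firstHit_bounds hE hσ he).1

lemma U_ge {E : Finset (Finset α)} {σ : α → ℕ} {t c : ℕ} (ht : 1 ≤ t)
    (hcov : ∀ j, t ≤ j → coverage E σ j ≤ c) (m : ℕ) :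
    Ufun E σ (t-1) ≤ Ufun E σ (t-1+m) + m * c := by
  induction m with
  | zero => simp
  | succ m ih =>
      have h1 := U_succ E σ (t-1+m)
      have h2 := hcov (t-1+m+1) (by omega)
      have h3 : t-1+(m+1) = t-1+m+1 := by omega
      rw [h3]
      nlinarith [ih]

lemma g_eq {E : Finset (Finset α)} {σ : α → ℕ} (i : ℕ) (m : ℕ) :
    gfun E σ i = gfun E σ (i+m) + (∑ j ∈ Finset.range m, Ufun E σ (i+j)) := by
  induction m with
  | zero => simp
  | succ m ih =>
      rw [Finset.sum_range_succ, ih, g_succ E σ (i+m)]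
      have : i + (m+1) = i + m + 1 := by omega
      rw [this]
      ring

lemma g_ge {E : Finset (Finset α)} {σ : α → ℕ} (i : ℕ) (m : ℕ) :
    (∑ j ∈ Finset.range m, Ufun E σ (i+j)) ≤ gfun E σ i := by
  rw [g_eq i m]; omega

end Recur

section CovFirst
variable {α : Type*} [DecidableEq α]
variable {V : Finset α} {E : Finset (Finset α)}
  (hE : ∀ e ∈ E, e.card = 2 ∧ e ⊆ V)
  {tau : ℕ} {S : Finset α} (hScov : IsSetCover E S) (hScard : S.card = tau)
  {σ : α → ℕ} (hσ : IsOrdering V σ)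

open scoped Classical

include hE hScov hScard hσ in
lemma coverage_le_of_notS {w : α} (hw : w ∈ V) (hwS : w ∉ S) :
    coverage E σ (σ w) ≤ tau := by
  rw [coverage, ← hScard]
  set F := E.filter (fun e => firstHit σ e = σ w) with hF
  have hwe : ∀ e ∈ F, w ∈ e := by
    intro e he
    rw [hF, Finset.mem_filter] at he
    obtain ⟨x, hx, hx2⟩ := exists_firstHit (σ := σ)
      (Finset.card_pos.1 (by rw [(hE e he.1).1]; norm_num))
    have hxV : x ∈ V := (hE e he.1).2 hx
    have : x = w := hσ.injOn hxV hw (by rw [hx2, he.2])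
    rwa [← this]
  set f : Finset α → α := fun e => if h : (e ∩ S).Nonempty then h.choose else w with hfd
  have hfS : ∀ e ∈ F, f e ∈ e ∩ S := by
    intro e he
    rw [hF, Finset.mem_filter] at he
    have hne := hScov e he.1
    simp only [hfd, dif_pos hne]
    exact hne.choose_spec
  have hkey : ∀ e ∈ F, e = {w, f e} := by
    intro e he
    have h1 := hfS e he
    rw [Finset.mem_inter] at h1
    have hne : f e ≠ w := by intro hcon2; exact hwS (hcon2 ▸ h1.2)
    have hsub : {w, f e} ⊆ e := by
      intro x hx
      rcases Finset.mem_insert.1 hx with rfl | hx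
      · exact hwe e he
      · rw [Finset.mem_singleton.1 hx]; exact h1.1
    have hcard : ({w, f e} : Finset α).card = 2 := by
      rw [Finset.card_insert_of_notMem (by simp [hne.symm]), Finset.card_singleton]
    rw [hF, Finset.mem_filter] at he
    exact ((Finset.eq_of_subset_of_card_le hsub (by rw [(hE e he.1).1, hcard])).symm)
  apply Finset.card_le_card_of_injOn f
  · intro e he
    exact (Finset.mem_inter.1 (hfS e he)).2
  · intro e he e' he' hff
    rw [hkey e he, hkey e' he', hff]

end CovFirst

section Decay
variable {α : Type*} [DecidableEq α]

open scoped Classical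

lemma U_le_sq {E : Finset (Finset α)} {σ : α → ℕ} {tau t : ℕ}
    (htau : 2 ≤ tau) (ht : 1 ≤ t)
    (hmaster : ∀ i, 2 * gfun E σ i ≤ (tau + 1) * Ufun E σ i)
    (hcov : ∀ j, t ≤ j → coverage E σ j ≤ tau) :
    Ufun E σ (t-1) ≤ tau^2 := by
  set Ut := Ufun E σ (t-1) with hUt
  set q := Ut / tau with hq
  set r := Ut % tau with hr
  have hqr : Ut = tau * q + r := by rw [hq, hr]; exact (Nat.div_add_mod Ut tau).symm
  have hrt : r < tau := Nat.mod_lt _ (by omega)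
  -- lower bound on g
  have hlow : ∀ j, Ut ≤ Ufun E σ (t-1+j) + j * tau := fun j => U_ge ht hcov j
  have hsum1 : (∑ j ∈ Finset.range (q+1), (Ut - j * tau))
      ≤ ∑ j ∈ Finset.range (q+1), Ufun E σ (t-1+j) := by
    apply Finset.sum_le_sum
    intro j hj
    have := hlow j
    omega
  have hsum2 : (∑ j ∈ Finset.range (q+1), (Ut - j * tau))
      = ∑ j ∈ Finset.range (q+1), ((q - j) * tau + r) := by
    apply Finset.sum_congr rfl
    intro j hj
    rw [Finset.mem_range] at hj
    have hjq : j ≤ q := by omega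
    have : j * tau ≤ q * tau := Nat.mul_le_mul_right _ hjq
    have h2 : (q - j) * tau = q * tau - j * tau := by
      rw [Nat.sub_mul]
    have h3 : tau * q = q * tau := Nat.mul_comm _ _
    omega
  have hrefl : ∑ j ∈ Finset.range (q+1), ((q - j) * tau + r)
      = ∑ j ∈ Finset.range (q+1), (j * tau + r) := by
    have h8 := Finset.sum_range_reflect (fun j => j * tau + r) (q+1)
    simp only [Nat.add_sub_cancel] at h8
    exact h8
  have hgauss : 2 * (∑ j ∈ Finset.range (q+1), j) = (q+1) * q := by
    have := Finset.sum_range_id_mul_two (q+1)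
    simp only [Nat.add_sub_cancel] at this
    omega
  have hsum3 : 2 * (∑ j ∈ Finset.range (q+1), (j * tau + r))
      = tau * ((q+1) * q) + 2 * (q+1) * r := by
    rw [Finset.sum_add_distrib, Finset.sum_const, Finset.card_range, smul_eq_mul]
    rw [← Finset.sum_mul]
    nlinarith [hgauss]
  have hglow : 2 * (∑ j ∈ Finset.range (q+1), (Ut - j * tau)) ≤ 2 * gfun E σ (t-1) := by
    have h9 := g_ge (E := E) (σ := σ) (t-1) (q+1)
    linarith [hsum1]
  have hmain : tau * ((q+1) * q) + 2 * (q+1) * r ≤ (tau + 1) * Ut := by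
    have hm := hmaster (t-1)
    rw [← hsum3, ← hrefl, ← hsum2]
    linarith [hglow]
  -- conclude Ut ≤ tau^2
  by_contra hcon
  push_neg at hcon
  have hq1 : tau ≤ q := by nlinarith
  rcases eq_or_lt_of_le hq1 with heq | hlt
  · rw [← heq] at hqr hmain
    nlinarith
  · nlinarith

lemma g_decay_step {E : Finset (Finset α)} {σ : α → ℕ} {tau : ℕ} (htau : 2 ≤ tau)
    (hmaster : ∀ i, 2 * gfun E σ i ≤ (tau + 1) * Ufun E σ i) (i : ℕ) :
    (tau + 1) * gfun E σ (i+1) ≤ (tau - 1) * gfun E σ i := by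
  have h1 := g_succ E σ i
  have h2 := hmaster i
  have h3 : (tau + 1) * gfun E σ i = (tau + 1) * gfun E σ (i+1) + (tau + 1) * Ufun E σ i := by
    rw [h1]; ring
  have h4 : (tau + 1) * gfun E σ i = (tau - 1) * gfun E σ i + 2 * gfun E σ i := by
    have ht : tau - 1 + 2 = tau + 1 := by omega
    rw [← ht, Nat.add_mul]
  linarith

lemma g_decay {E : Finset (Finset α)} {σ : α → ℕ} {tau : ℕ} (htau : 2 ≤ tau)
    (hmaster : ∀ i, 2 * gfun E σ i ≤ (tau + 1) * Ufun E σ i) (i : ℕ) (m : ℕ) :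
    (tau + 1)^m * gfun E σ (i+m) ≤ (tau - 1)^m * gfun E σ i := by
  induction m with
  | zero => simp
  | succ m ih =>
      have h1 : (tau + 1)^(m+1) * gfun E σ (i+(m+1))
          = (tau + 1)^m * ((tau + 1) * gfun E σ (i+m+1)) := by
        rw [pow_succ]; ring_nf
      have h2 := g_decay_step htau hmaster (i+m)
      calc (tau + 1)^(m+1) * gfun E σ (i+(m+1))
          = (tau + 1)^m * ((tau + 1) * gfun E σ (i+m+1)) := h1
        _ ≤ (tau + 1)^m * ((tau - 1) * gfun E σ (i+m)) := Nat.mul_le_mul_left _ h2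
        _ = (tau - 1) * ((tau + 1)^m * gfun E σ (i+m)) := by ring
        _ ≤ (tau - 1) * ((tau - 1)^m * gfun E σ i) := Nat.mul_le_mul_left _ ih
        _ = (tau - 1)^(m+1) * gfun E σ i := by rw [pow_succ]; ring

end Decay

section Endgame

lemma small_case {tau P : ℕ} (htau : 2 ≤ tau) (hP : P ≤ 2 * tau) :
    (P : ℝ) ≤ 2 * (tau : ℝ) * Real.logb 2 (tau : ℝ) := by
  have h1 : (1 : ℝ) ≤ Real.logb 2 (tau : ℝ) := by
    have := Real.logb_self_eq_one (b := 2) (by norm_num)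
    rw [← this]
    apply Real.logb_le_logb_of_le (by norm_num) (by norm_num)
    exact_mod_cast htau
  have h2 : (P : ℝ) ≤ 2 * (tau : ℝ) := by exact_mod_cast hP
  nlinarith [h2, h1, Nat.cast_nonneg (α := ℝ) tau]

lemma endgame_real {tau t m P : ℕ} (htau : 3 ≤ tau) (ht : t ≤ tau) (hm : 1 ≤ m)
    (hP : P ≤ t + m)
    (hkey : 2 * (tau+1)^m ≤ (tau-1)^m * ((tau+1) * tau^2)) :
    (P : ℝ) ≤ 2 * (tau : ℝ) * Real.logb 2 (tau : ℝ) := by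
  set x : ℝ := (tau : ℝ) with hx
  have hx3 : (3 : ℝ) ≤ x := by rw [hx]; exact_mod_cast htau
  have hx0 : (0 : ℝ) < x := by linarith
  have hkeyR : 2 * (x+1)^m ≤ (x-1)^m * ((x+1) * x^2) := by
    have hc : ((tau - 1 : ℕ) : ℝ) = x - 1 := by
      rw [hx]; push_cast [Nat.cast_sub (by omega : 1 ≤ tau)]; ring
    calc (2 : ℝ) * (x+1)^m = ((2 * (tau+1)^m : ℕ) : ℝ) := by push_cast; ring
      _ ≤ (((tau-1)^m * ((tau+1) * tau^2) : ℕ) : ℝ) := by exact_mod_cast hkey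
      _ = (x-1)^m * ((x+1) * x^2) := by push_cast [hc]; ring
  have hxm1 : (0:ℝ) < x - 1 := by linarith
  have hratio : ((x+1)/(x-1))^m ≤ (x+1) * x^2 / 2 := by
    rw [div_pow, div_le_div_iff₀ (by positivity) (by norm_num)]
    nlinarith [hkeyR]
  -- log of the ratio is at least 2/(x+1)
  have hlograt : 2/(x+1) ≤ Real.log ((x+1)/(x-1)) := by
    have hpos : (0:ℝ) < (x-1)/(x+1) := by positivity
    have h1 := Real.log_le_sub_one_of_pos hpos
    have h2 : Real.log ((x+1)/(x-1)) = - Real.log ((x-1)/(x+1)) := by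
      rw [← Real.log_inv, inv_div]
    have h3 : (x-1)/(x+1) - 1 = -(2/(x+1)) := by
      field_simp
      ring
    rw [h2]
    rw [h3] at h1
    linarith
  -- take logs
  have hlog1 : (m : ℝ) * Real.log ((x+1)/(x-1)) ≤ Real.log ((x+1) * x^2 / 2) := by
    have h0 : (0:ℝ) < ((x+1)/(x-1))^m := by positivity
    have := Real.log_le_log h0 hratio
    rwa [Real.log_pow] at this
  have hlogx1 : (1:ℝ) ≤ Real.log x := by
    rw [Real.le_log_iff_exp_le hx0]
    have := Real.exp_one_lt_d9
    linarith
  -- bound the log of M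
  have hM : Real.log ((x+1) * x^2 / 2) ≤ 3 * Real.log x - 1/3 := by
    have hMle : (x+1) * x^2 / 2 ≤ (2/3) * x^3 := by nlinarith
    have h1 : Real.log ((x+1) * x^2 / 2) ≤ Real.log ((2/3) * x^3) :=
      Real.log_le_log (by positivity) hMle
    have h2 : Real.log ((2/3) * x^3) = Real.log (2/3) + 3 * Real.log x := by
      rw [Real.log_mul (by norm_num) (by positivity)]
      congr 1
      rw [show x^3 = x^(3:ℕ) by norm_num, Real.log_pow]
      push_cast; ring
    have h3 : Real.log (2/3 : ℝ) ≤ -(1/3) := by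
      have := Real.log_le_sub_one_of_pos (show (0:ℝ) < 2/3 by norm_num)
      linarith
    linarith
  -- combine : m * 2/(x+1) ≤ 3 log x - 1/3
  have hm0 : (0:ℝ) ≤ (m:ℝ) := Nat.cast_nonneg m
  have hcomb : (m:ℝ) * (2/(x+1)) ≤ 3 * Real.log x - 1/3 := by
    calc (m:ℝ) * (2/(x+1)) ≤ (m:ℝ) * Real.log ((x+1)/(x-1)) := by
          apply mul_le_mul_of_nonneg_left hlograt hm0
      _ ≤ Real.log ((x+1) * x^2 / 2) := hlog1
      _ ≤ 3 * Real.log x - 1/3 := hM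
  have hym : (m:ℝ) ≤ ((x+1)/2) * (3 * Real.log x - 1/3) := by
    have hpos : (0:ℝ) < 2/(x+1) := by positivity
    rw [← mul_le_mul_iff_of_pos_right hpos]
    calc (m:ℝ) * (2/(x+1)) ≤ 3 * Real.log x - 1/3 := hcomb
      _ = ((x+1)/2) * (3 * Real.log x - 1/3) * (2/(x+1)) := by
          field_simp
  have hcoef : ((x+1)/2) ≤ (2/3) * x := by linarith
  have hnn : (0:ℝ) ≤ 3 * Real.log x - 1/3 := by linarith
  have hym2 : (m:ℝ) ≤ 2 * x * Real.log x - (2/9) * x := by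
    calc (m:ℝ) ≤ ((x+1)/2) * (3 * Real.log x - 1/3) := hym
      _ ≤ ((2/3) * x) * (3 * Real.log x - 1/3) := by
          apply mul_le_mul_of_nonneg_right hcoef hnn
      _ = 2 * x * Real.log x - (2/9) * x := by ring
  -- final
  have hPxy : (P:ℝ) ≤ x + (m:ℝ) := by
    have h1 : (P:ℝ) ≤ (t:ℝ) + (m:ℝ) := by exact_mod_cast hP
    have h2 : (t:ℝ) ≤ x := by rw [hx]; exact_mod_cast ht
    linarith
  have hl2pos : (0:ℝ) < Real.log 2 := Real.log_pos (by norm_num)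
  have hl2 : Real.log 2 ≤ 0.72 := by
    have := Real.log_two_lt_d9
    linarith
  rw [Real.logb, hx]
  rw [show 2 * x * (Real.log x / Real.log 2) = (2 * x * Real.log x) / Real.log 2 by ring]
  rw [le_div_iff₀ hl2pos]
  have hxlx : (0:ℝ) ≤ x * Real.log x := mul_nonneg (le_of_lt hx0) (by linarith)
  have hA : (P:ℝ) ≤ 2 * x * Real.log x + (7/9) * x := by linarith
  have hB : (P:ℝ) * Real.log 2 ≤ (2 * x * Real.log x + (7/9) * x) * Real.log 2 := by
    apply mul_le_mul_of_nonneg_right hA (le_of_lt hl2pos)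
  have hC : (2 * x * Real.log x + (7/9) * x) * Real.log 2
      ≤ (2 * x * Real.log x + (7/9) * x) * 0.72 := by
    apply mul_le_mul_of_nonneg_left hl2 (by nlinarith)
  have hD : (2 * x * Real.log x + (7/9) * x) * 0.72 ≤ 2 * x * Real.log x := by
    nlinarith [mul_nonneg (le_of_lt hx0) (sub_nonneg.2 hlogx1)]
  linarith

end Endgame


open scoped Classical in
/-- For a graph `G` (a rank-two hypergraph) with vertex cover number `τ ≥ 2` and a fixed
minimum vertex cover `S`: in any cost-minimizing ordering `σ` whose first vertex lies
outside `S`, the first effective coverage is at most `τ` and `|E(G)| ≤ τ²`; moreover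
(for any cost-minimizing ordering) the associated cover size satisfies
`τ⁺ ≤ 2 τ log₂ τ`. -/
theorem stmt_9 {α : Type*} [DecidableEq α] (V : Finset α) (E : Finset (Finset α))
    (hE : ∀ e ∈ E, e.card = 2 ∧ e ⊆ V)
    (tau : ℕ) (htau : 2 ≤ tau)
    (S : Finset α) (hSV : S ⊆ V) (hScov : IsSetCover E S) (hScard : S.card = tau)
    (hSmin : ∀ T ⊆ V, IsSetCover E T → tau ≤ T.card)
    (σ : α → ℕ) (hσ : IsOrdering V σ)
    (hopt : ∀ τ' : α → ℕ, IsOrdering V τ' → totalCost E σ ≤ totalCost E τ') :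
    (∀ v ∈ V, σ v = 1 → v ∉ S → coverage E σ 1 ≤ tau ∧ E.card ≤ tau ^ 2) ∧
    ((E.sup (firstHit σ) : ℕ) : ℝ) ≤ 2 * (tau : ℝ) * Real.logb 2 (tau : ℝ) := by
  have hmaster : ∀ i, 2 * gfun E σ i ≤ (tau + 1) * Ufun E σ i :=
    fun i => master hE hSV hScov hScard hσ hopt i
  constructor
  · -- first conjunct
    intro v hv hσv hvS
    have hcov1 : coverage E σ 1 ≤ tau := by
      have := coverage_le_of_notS hE hScov hScard hσ hv hvS
      rwa [hσv] at this
    refine ⟨hcov1, ?_⟩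
    have hcovall : ∀ j, 1 ≤ j → coverage E σ j ≤ tau := by
      intro j hj
      have hj1 : j = 1 + (j - 1) := by omega
      rw [hj1]
      exact le_trans (coverage_mono hE hσ hopt le_rfl (j-1)) hcov1
    have hU := U_le_sq htau le_rfl hmaster hcovall
    simpa [U_zero hE hσ] using hU
  · -- second conjunct
    set n := V.card with hn
    set P := E.sup (firstHit σ) with hP
    by_cases hE0 : E = ∅
    · have : P = 0 := by rw [hP, hE0]; simp
      rw [this]
      have h1 : (0:ℝ) ≤ Real.logb 2 (tau:ℝ) :=
        Real.logb_nonneg (by norm_num) (by exact_mod_cast Nat.one_le_of_lt htau)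
      have h2 : (0:ℝ) ≤ (tau:ℝ) := Nat.cast_nonneg tau
      simp only [Nat.cast_zero]
      nlinarith
    · have hEne : E.Nonempty := Finset.nonempty_iff_ne_empty.2 hE0
      obtain ⟨estar, hestar, hPe⟩ := Finset.exists_mem_eq_sup E hEne (firstHit σ)
      have hPb := firstHit_bounds hE hσ hestar
      -- the set of non-cover vertices
      set W := V.filter (fun v => v ∉ S) with hW
      by_cases hW0 : W = ∅
      · -- all vertices in S : P ≤ n ≤ tau
        have hVS : V ⊆ S := by
          intro v hv
          by_contra hvS
          have : v ∈ W := by rw [hW]; exact Finset.mem_filter.2 ⟨hv, hvS⟩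
          rw [hW0] at this
          exact absurd this (Finset.notMem_empty v)
        have hPt : P ≤ tau := by
          rw [hP]
          apply Finset.sup_le
          intro e he
          have := (firstHit_bounds hE hσ he).2
          have := Finset.card_le_card hVS
          omega
        exact small_case htau (by omega)
      · have hWne : W.Nonempty := Finset.nonempty_iff_ne_empty.2 hW0
        have hWim : (W.image σ).Nonempty := hWne.image σ
        set t := (W.image σ).min' hWim with htd
        obtain ⟨w, hwW, hwt⟩ : ∃ w ∈ W, σ w = t := by
          have := Finset.min'_mem (W.image σ) hWim
          rw [Finset.mem_image] at this
          obtain ⟨w, h1, h2⟩ := this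
          exact ⟨w, h1, h2⟩
        have hwV : w ∈ V := (Finset.mem_filter.1 hwW).1
        have hwS : w ∉ S := (Finset.mem_filter.1 hwW).2
        have ht1 : 1 ≤ t := by
          rw [← hwt]; exact (pos_mem hσ hwV).1
        have htn : t ≤ n := by
          rw [← hwt]; exact (pos_mem hσ hwV).2
        have hmin : ∀ u ∈ W, t ≤ σ u := fun u hu =>
          Finset.min'_le _ _ (Finset.mem_image_of_mem σ hu)
        -- coverage bound from position t onwards
        have hcovt : ∀ j, t ≤ j → coverage E σ j ≤ tau := by
          intro j hj
          have hcovT : coverage E σ t ≤ tau := by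
            have := coverage_le_of_notS hE hScov hScard hσ hwV hwS
            rwa [hwt] at this
          have hj1 : j = t + (j - t) := by omega
          rw [hj1]
          exact le_trans (coverage_mono hE hσ hopt ht1 (j - t)) hcovT
        have hU := U_le_sq htau ht1 hmaster hcovt
        -- prefix vertices are in S
        have hpreS : ∀ v ∈ V, σ v ≤ t - 1 → v ∈ S := by
          intro v hv hvt
          by_contra hvS
          have : v ∈ W := by rw [hW]; exact Finset.mem_filter.2 ⟨hv, hvS⟩
          have := hmin v this
          omega
        -- t - 1 ≤ card of prefix-cover vertices
        set S' := V.filter (fun v => σ v ≤ t - 1) with hS'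
        have hS'S : S' ⊆ S := by
          intro v hv
          rw [hS', Finset.mem_filter] at hv
          exact hpreS v hv.1 hv.2
        have hS'card : t - 1 ≤ S'.card := by
          have hsub : Finset.Icc 1 (t-1) ⊆ S'.image σ := by
            intro j hj
            rw [Finset.mem_Icc] at hj
            have hj2 : j ∈ Set.Icc 1 n := by
              simp only [Set.mem_Icc]; omega
            obtain ⟨v, hv, hvj⟩ := hσ.surjOn hj2
            rw [Finset.mem_image]
            refine ⟨v, ?_, hvj⟩
            rw [hS', Finset.mem_filter]
            exact ⟨hv, by omega⟩
          have h1 := Finset.card_le_card hsub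
          have h2 := Finset.card_image_le (s := S') (f := σ)
          rw [Nat.card_Icc] at h1
          omega
        by_cases hc : ∃ s ∈ S, t ≤ σ s
        · -- there is a cover vertex at position ≥ t, so t ≤ tau
          obtain ⟨s₁, hs₁S, hs₁t⟩ := hc
          have hts : t ≤ tau := by
            have hs₁S' : s₁ ∉ S' := by
              rw [hS', Finset.mem_filter]
              rintro ⟨-, h⟩
              omega
            have hsub : insert s₁ S' ⊆ S := by
              intro x hx
              rcases Finset.mem_insert.1 hx with rfl | hx
              · exact hs₁S
              · exact hS'S hx
            have := Finset.card_le_card hsub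
            rw [Finset.card_insert_of_notMem hs₁S', hScard] at this
            omega
          by_cases hPt : P ≤ t
          · exact small_case htau (by omega)
          · push_neg at hPt
            set m := P - t with hm
            have hm1 : 1 ≤ m := by omega
            -- 1 ≤ g (P-1)
            have h1g : 1 ≤ gfun E σ (P-1) := by
              rw [gfun]
              have hmem : estar ∈ E.filter (fun e => P - 1 < firstHit σ e) := by
                rw [Finset.mem_filter]
                exact ⟨hestar, by omega⟩
              calc 1 = firstHit σ estar - (P-1) := by omega
                _ ≤ ∑ e ∈ E.filter (fun e => P - 1 < firstHit σ e),
                    (firstHit σ e - (P-1)) :=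
                  Finset.single_le_sum (f := fun e => firstHit σ e - (P-1))
                    (fun e _ => Nat.zero_le _) hmem
            have hdecay := g_decay htau hmaster (t-1) m
            have hidx : t - 1 + m = P - 1 := by omega
            rw [hidx] at hdecay
            have hg0 : 2 * gfun E σ (t-1) ≤ (tau+1) * tau^2 := by
              calc 2 * gfun E σ (t-1) ≤ (tau+1) * Ufun E σ (t-1) := hmaster (t-1)
                _ ≤ (tau+1) * tau^2 := Nat.mul_le_mul_left _ hU
            have hkey : 2 * (tau+1)^m ≤ (tau-1)^m * ((tau+1) * tau^2) := by
              calc 2 * (tau+1)^m ≤ 2 * ((tau+1)^m * gfun E σ (P-1)) := by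
                    have := Nat.mul_le_mul_left ((tau+1)^m) h1g
                    omega
                _ ≤ 2 * ((tau-1)^m * gfun E σ (t-1)) := by
                    have := Nat.mul_le_mul_left 2 hdecay
                    omega
                _ = (tau-1)^m * (2 * gfun E σ (t-1)) := by ring
                _ ≤ (tau-1)^m * ((tau+1) * tau^2) := Nat.mul_le_mul_left _ hg0
            rcases eq_or_lt_of_le htau with htau2 | htau3
            · -- tau = 2
              have ht2 : tau = 2 := htau2.symm
              subst ht2
              have hkey2 : 2 * 3^m ≤ 12 := by
                norm_num at hkey
                convert hkey using 2
              have hmle : m ≤ 1 := by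
                by_contra hm2
                push_neg at hm2
                have h9 : (9:ℕ) ≤ 3^m := by
                  calc (9:ℕ) = 3^2 := by norm_num
                    _ ≤ 3^m := Nat.pow_le_pow_right (by norm_num) hm2
                linarith
              exact small_case (by norm_num) (by omega)
            · -- tau ≥ 3
              exact endgame_real htau3 hts hm1 (by omega) hkey
        · -- no cover vertex at position ≥ t : every edge covered before t, P ≤ tau
          push_neg at hc
          have hPt : P ≤ tau := by
            rw [hP]
            apply Finset.sup_le
            intro e he
            obtain ⟨s, hs⟩ := hScov e he
            rw [Finset.mem_inter] at hs
            have h1 : firstHit σ e ≤ σ s := firstHit_le hs.1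
            have h2 := hc s hs.2
            have h3 : σ s ≤ t - 1 := by omega
            -- σ s ≤ t-1 ≤ |S'| ≤ tau
            have h4 := Finset.card_le_card hS'S
            rw [hScard] at h4
            omega
          exact small_case htau (by omega)
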